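/- Let S, T, U be modules in a family of orthogonal points with endomorphism rings k, S ≇ T, and Ext^1_R(S,U) ≠ 0, Ext^1_R(T,U) ≠ 0. Then there exists an indecomposable left R-module M of length 3 which is not uniserial: M has two distinct submodules of length 2. -/

import Mathlib

open CategoryTheory

variable (k R : Type) [Field k] [Ring R] [Algebra k R]

/-- For a `k`-algebra `R`, the category of `R`-modules is `k`-linear: scalars act on
hom-groups through the algebra map `k → R`, which is central. -/
noncomputable instance ModuleCat.algLinear : Linear k (ModuleCat.{0} R) where
  homModule M N :=
    letI : Module k N := Module.compHom N (algebraMap k R)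
    haveI : SMulCommClass R k N := ⟨fun r c n => by
      show r • (algebraMap k R c • n) = algebraMap k R c • r • n
      rw [smul_smul, smul_smul, Algebra.commutes]⟩
    ModuleCat.Hom.instModule
  smul_comp := by intros X Y Z c f g; ext x; exact map_smul g.hom _ _
  comp_smul := by intros; ext; rfl

/-- `Ext¹_R(M, N)`, as a `k`-vector space, for `R` a `k`-algebra. -/
noncomputable def ext1 (M N : ModuleCat.{0} R) : ModuleCat k :=
  ((Ext k (ModuleCat.{0} R) 1).obj (Opposite.op M)).obj N

variable {k R}

/-- `0 → T → E → S → 0` is a short exact sequence: `E` is an extension of `S` by `T`. -/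
def IsExtension {T E S : ModuleCat.{0} R} (ι : T ⟶ E) (π : E ⟶ S) : Prop :=
  Function.Injective ι ∧ Function.Surjective π ∧ LinearMap.range ι.hom = LinearMap.ker π.hom

/-- The extension `0 → T → E → S → 0` is split. -/
def IsSplit {T E S : ModuleCat.{0} R} (_ι : T ⟶ E) (π : E ⟶ S) : Prop :=
  ∃ σ : S ⟶ E, σ ≫ π = 𝟙 S

/-- Every endomorphism of `M` is a scalar: `End_R(M) ≅ k`. -/
def EndIsScalar (k : Type) [Field k] {R : Type} [Ring R] [Algebra k R]
    (M : ModuleCat.{0} R) : Prop :=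
  ∀ f : M ⟶ M, ∃ c : k, f = c • 𝟙 M

/-- `M` has composition length `n`. -/
def HasLength {R : Type} [Ring R] (M : ModuleCat.{0} R) (n : ℕ) : Prop :=
  ∃ s : CompositionSeries (Submodule R M), s.head = ⊥ ∧ s.last = ⊤ ∧ s.length = n

/-- `M` is indecomposable: nonzero, and not a direct sum of two nonzero submodules. -/
def IsIndecomposable {R : Type} [Ring R] (M : ModuleCat.{0} R) : Prop :=
  Nontrivial M ∧ ¬ ∃ N N' : Submodule R M, N ≠ ⊥ ∧ N' ≠ ⊥ ∧ IsCompl N N'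

/-- The lattice of submodules of `M` is a chain. -/
def IsUniserialModule {R : Type} [Ring R] (M : ModuleCat.{0} R) : Prop :=
  ∀ N N' : Submodule R M, N ≤ N' ∨ N' ≤ N

namespace Stmt7Aux

/-! ### Auxiliary lemmas -/

theorem hasLength_two {M : Type} [AddCommGroup M] [Module R M]
    (A : Submodule R M) (h1 : (⊥ : Submodule R M) ⋖ A) (h2 : A ⋖ ⊤) :
    HasLength (ModuleCat.of R M) 2 := by
  refine ⟨⟨2, ![⊥, A, ⊤], ?_⟩, ?_, ?_, rfl⟩
  · intro i
    fin_cases i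
    · exact h1
    · exact h2
  · rfl
  · rfl

theorem hasLength_three {M : Type} [AddCommGroup M] [Module R M]
    (A B : Submodule R M) (h1 : (⊥ : Submodule R M) ⋖ A) (h2 : A ⋖ B) (h3 : B ⋖ ⊤) :
    HasLength (ModuleCat.of R M) 3 := by
  refine ⟨⟨3, ![⊥, A, B, ⊤], ?_⟩, ?_, ?_, rfl⟩
  · intro i
    fin_cases i
    · exact h1
    · exact h2
    · exact h3
  · rfl
  · rfl

theorem hasLength_congr {M₁ M₂ : Type} [AddCommGroup M₁] [Module R M₁]
    [AddCommGroup M₂] [Module R M₂] (e : M₁ ≃ₗ[R] M₂) {n : ℕ}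
    (h : HasLength (ModuleCat.of R M₁) n) : HasLength (ModuleCat.of R M₂) n := by
  obtain ⟨s, hh, hl, hn⟩ := h
  refine ⟨⟨s.length, fun i => Submodule.map (e : M₁ →ₗ[R] M₂) (s i), ?_⟩, ?_, ?_, hn⟩
  · intro i
    have h' : s i.castSucc ⋖ s i.succ := s.step i
    show Submodule.map _ _ ⋖ Submodule.map _ _
    have := apply_covBy_apply_iff (Submodule.orderIsoMapComap (e : M₁ ≃ₗ[R] M₂)) (a := s i.castSucc)
      (b := s i.succ)
    rw [Submodule.orderIsoMapComap_apply, Submodule.orderIsoMapComap_apply] at this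
    exact this.2 h'
  · show Submodule.map _ (s.head) = ⊥
    rw [hh, Submodule.map_bot]
  · show Submodule.map _ (s.last) = ⊤
    rw [hl, Submodule.map_top, LinearEquiv.range]

theorem submodule_prod_simples {A B : Type} [AddCommGroup A] [AddCommGroup B]
    [Module R A] [Module R B] [IsSimpleModule R A] [IsSimpleModule R B]
    (horth : ∀ g : A →ₗ[R] B, g = 0) (X : Submodule R (A × B)) :
    X = ⊥ ∨ X = LinearMap.ker (LinearMap.snd R A B) ∨
      X = LinearMap.ker (LinearMap.fst R A B) ∨ X = ⊤ := by
  set pS := LinearMap.fst R A B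
  set pT := LinearMap.snd R A B
  have hkerfst_simple : IsSimpleModule R ↥(LinearMap.ker pS) := by
    refine IsSimpleModule.congr (N := B) ?_
    refine LinearEquiv.ofBijective (pT.comp (LinearMap.ker pS).subtype) ⟨?_, ?_⟩
    · intro x y hxy
      ext
      · have hx := x.2; have hy := y.2
        simp only [LinearMap.mem_ker] at hx hy
        show pS x.1 = pS y.1
        rw [hx, hy]
      · exact hxy
    · intro b
      exact ⟨⟨(0, b), by simp [pS]⟩, rfl⟩
  have hkerfst_atom : IsAtom (LinearMap.ker pS) := isSimpleModule_iff_isAtom.mp hkerfst_simple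
  rcases (eq_bot_or_eq_top (Submodule.map pS X) : Submodule.map pS X = ⊥ ∨ _) with hmap | hmap
  · have hX : X ≤ LinearMap.ker pS := by
      intro x hx
      have : pS x ∈ Submodule.map pS X := ⟨x, hx, rfl⟩
      rw [hmap] at this
      simpa using this
    rcases (hkerfst_atom.le_iff.mp hX) with h | h
    · exact Or.inl h
    · exact Or.inr (Or.inr (Or.inl h))
  · rcases (hkerfst_atom.le_iff.mp (inf_le_right : X ⊓ LinearMap.ker pS ≤ _)) with hB | hB
    · have hinj : Function.Injective (pS.comp X.subtype) := by
        intro x y hxy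
        have : (x : A × B) - y ∈ X ⊓ LinearMap.ker pS := by
          rw [Submodule.mem_inf]
          refine ⟨X.sub_mem x.2 y.2, ?_⟩
          rw [LinearMap.mem_ker, map_sub, show pS (x : A × B) = pS (y : A × B) from hxy,
            sub_self]
        rw [hB, Submodule.mem_bot] at this
        exact Subtype.ext (sub_eq_zero.mp this)
      have hsurj : Function.Surjective (pS.comp X.subtype) := by
        intro a
        have : a ∈ Submodule.map pS X := hmap ▸ Submodule.mem_top
        obtain ⟨x, hx, hxa⟩ := this
        exact ⟨⟨x, hx⟩, hxa⟩
      set e := LinearEquiv.ofBijective (pS.comp X.subtype) ⟨hinj, hsurj⟩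
      have hg : (pT.comp X.subtype).comp (e.symm : A →ₗ[R] ↥X) = 0 := horth _
      have hgr : ∀ x : ↥X, pT (x : A × B) = 0 := by
        intro x
        have h0 := LinearMap.congr_fun hg (e x)
        simp only [LinearMap.comp_apply, LinearMap.zero_apply, LinearEquiv.coe_coe,
          e.symm_apply_apply] at h0
        exact h0
      refine Or.inr (Or.inl ?_)
      apply le_antisymm
      · intro x hx
        simpa using hgr ⟨x, hx⟩
      · intro x hx
        simp only [LinearMap.mem_ker] at hx
        obtain ⟨y, hy⟩ := hsurj (pS x)
        have hy2 : pT (y : A × B) = 0 := hgr y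
        have : (y : A × B) = x := by
          ext
          · exact hy
          · show pT _ = pT _
            rw [hy2, hx]
        rw [← this]; exact y.2
    · have hker : LinearMap.ker pS ≤ X := hB ▸ inf_le_left
      refine Or.inr (Or.inr (Or.inr ?_))
      rw [eq_top_iff]
      intro x _
      have : pS x ∈ Submodule.map pS X := hmap ▸ Submodule.mem_top
      obtain ⟨y, hy, hya⟩ := this
      have : x - y ∈ LinearMap.ker pS := by
        simp only [LinearMap.mem_ker, map_sub, hya, sub_self]
      have := hker this
      simpa using X.add_mem hy this

theorem retraction_of_compl {E U M : Type} [AddCommGroup E] [Module R E]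
    [AddCommGroup U] [Module R U] [AddCommGroup M] [Module R M]
    (ι : U →ₗ[R] E) (hι : Function.Injective ι) (j : E →ₗ[R] M) (hj : Function.Injective j)
    (X : Submodule R M) (hdisj : X ⊓ LinearMap.range (j.comp ι) = ⊥)
    (hcover : ∀ e : E, ∃ e' u, j e' ∈ X ∧ e = e' + ι u) :
    ∃ r : E →ₗ[R] U, r.comp ι = LinearMap.id := by
  set X₁ : Submodule R E := Submodule.comap j X with hX₁
  set K₁ : Submodule R E := LinearMap.range ι with hK₁
  have hc : IsCompl K₁ X₁ := by
    constructor
    · rw [disjoint_iff]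
      rw [eq_bot_iff]
      rintro e ⟨⟨u, hu⟩, (he : j e ∈ X)⟩
      have : j e ∈ X ⊓ LinearMap.range (j.comp ι) :=
        ⟨he, ⟨u, by rw [LinearMap.comp_apply, hu]⟩⟩
      rw [hdisj, Submodule.mem_bot] at this
      have : e = 0 := hj (by rw [this, map_zero])
      simp [this]
    · rw [codisjoint_iff, eq_top_iff]
      intro e _
      obtain ⟨e', u, he', heq⟩ := hcover e
      rw [heq]
      exact Submodule.add_mem _ (Submodule.mem_sup_right he')
        (Submodule.mem_sup_left ⟨u, rfl⟩)
  let pr : E →ₗ[R] ↥K₁ := K₁.linearProjOfIsCompl X₁ hc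
  let eq : U ≃ₗ[R] ↥K₁ := LinearEquiv.ofInjective ι hι
  refine ⟨(eq.symm : ↥K₁ →ₗ[R] U).comp pr, ?_⟩
  refine LinearMap.ext fun u => ?_
  simp only [LinearMap.comp_apply, LinearMap.id_apply, LinearEquiv.coe_coe]
  have h1 : pr (ι u) = ⟨ι u, ⟨u, rfl⟩⟩ :=
    Submodule.linearProjOfIsCompl_apply_left hc ⟨ι u, ⟨u, rfl⟩⟩
  rw [h1, LinearEquiv.symm_apply_eq]
  exact Subtype.ext (by rw [LinearEquiv.ofInjective_apply])

theorem exists_nonsplit (S U : ModuleCat.{0} R) (h : Nontrivial (ext1 k R S U)) :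
    ∃ (E : Type) (_ : AddCommGroup E) (_ : Module R E) (ι : ↥U →ₗ[R] E) (π : E →ₗ[R] ↥S),
      Function.Injective ι ∧ Function.Surjective π ∧
      LinearMap.range ι = LinearMap.ker π ∧
      ∀ r : E →ₗ[R] ↥U, r.comp ι ≠ LinearMap.id := by
  classical
  set P := ProjectiveResolution.of S with hP
  set K := P.complex.linearYonedaObj k U with hK
  have e := P.isoExt (R := k) 1 U
  have hnz : ¬ Limits.IsZero (K.homology 1) := by
    intro hz
    have hz' : Limits.IsZero (ext1 k R S U) := hz.of_iso e
    have : Subsingleton (ext1 k R S U) := ModuleCat.isZero_iff_subsingleton.mp hz'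
    exact (not_subsingleton_iff_nontrivial.mpr h) this
  have hne : ¬ K.ExactAt 1 := fun hex =>
    hnz ((HomologicalComplex.exactAt_iff_isZero_homology K 1).mp hex)
  rw [HomologicalComplex.exactAt_iff' K 0 1 2 (by simp) (by simp)] at hne
  rw [ShortComplex.moduleCat_exact_iff] at hne
  push_neg at hne
  obtain ⟨f, hf0, hfnb⟩ := hne
  have hty : (K.X 1 : Type) = (P.complex.X 1 ⟶ U) := rfl
  have hd12 : ∀ (g : P.complex.X 1 ⟶ U), (K.d 1 2) g = P.complex.d 2 1 ≫ g := fun g => rfl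
  have hd01 : ∀ (g : P.complex.X 0 ⟶ U), (K.d 0 1) g = P.complex.d 1 0 ≫ g := fun g => rfl
  -- unpack the resolution data
  let d10 : ↥(P.complex.X 1) →ₗ[R] ↥(P.complex.X 0) := (P.complex.d 1 0).hom
  let d21 : ↥(P.complex.X 2) →ₗ[R] ↥(P.complex.X 1) := (P.complex.d 2 1).hom
  let π0 : ↥(P.complex.X 0) →ₗ[R] ↥S := (P.π.f 0).hom
  let f' : ↥(P.complex.X 1) →ₗ[R] ↥U := (f : P.complex.X 1 ⟶ U).hom
  have hπsurj : Function.Surjective π0 :=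
    (ModuleCat.epi_iff_surjective (P.π.f 0)).mp inferInstance
  have hdπ : ∀ p, π0 (d10 p) = 0 := by
    intro p
    have := P.complex_d_comp_π_f_zero
    exact LinearMap.congr_fun (congrArg ModuleCat.Hom.hom this) p
  have hexact0 : ∀ a, π0 a = 0 → ∃ p, d10 p = a := by
    have := ShortComplex.moduleCat_exact_iff _ |>.mp P.exact₀
    exact this
  have hexact1 : ∀ p, d10 p = 0 → ∃ q, d21 q = p := by
    have h1 := P.complex_exactAt_succ 0
    rw [HomologicalComplex.exactAt_iff' P.complex 2 1 0 (by simp) (by simp)] at h1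
    exact ShortComplex.moduleCat_exact_iff _ |>.mp h1
  have hfd : ∀ q, f' (d21 q) = 0 := by
    intro q
    have : (K.d 1 2) f = 0 := hf0
    have this : P.complex.d 2 1 ≫ (f : P.complex.X 1 ⟶ U) = 0 := this
    exact LinearMap.congr_fun (congrArg ModuleCat.Hom.hom this) q
  -- construct the extension as a quotient of U × P₀
  set W : Submodule R (↥U × ↥(P.complex.X 0)) :=
    LinearMap.range (f'.prod (-d10)) with hW
  let E := (↥U × ↥(P.complex.X 0)) ⧸ W
  let ι : ↥U →ₗ[R] E := W.mkQ.comp (LinearMap.inl R ↥U ↥(P.complex.X 0))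
  have hWle : W ≤ LinearMap.ker (π0.comp (LinearMap.snd R ↥U ↥(P.complex.X 0))) := by
    rintro ⟨u, a⟩ ⟨p, hp⟩
    simp only [LinearMap.prod_apply, Function.prod, LinearMap.neg_apply, Prod.mk.injEq] at hp
    rw [LinearMap.mem_ker]
    simp only [LinearMap.comp_apply, LinearMap.snd_apply]
    rw [← hp.2, map_neg, hdπ, neg_zero]
  let π : E →ₗ[R] ↥S := W.liftQ (π0.comp (LinearMap.snd R ↥U ↥(P.complex.X 0))) hWle
  refine ⟨E, inferInstance, inferInstance, ι, π, ?_, ?_, ?_, ?_⟩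
  · -- injectivity of ι
    rw [← LinearMap.ker_eq_bot, LinearMap.ker_eq_bot']
    intro u hu
    have : ((u, 0) : ↥U × ↥(P.complex.X 0)) ∈ W := by
      rwa [← Submodule.Quotient.mk_eq_zero W]
    obtain ⟨p, hp⟩ := this
    simp only [LinearMap.prod_apply, Function.prod, LinearMap.neg_apply, Prod.mk.injEq] at hp
    have hd0 : d10 p = 0 := by rw [← neg_eq_zero, hp.2]
    obtain ⟨q, hq⟩ := hexact1 p hd0
    rw [← hp.1, ← hq, hfd]
  · -- surjectivity of π
    intro s
    obtain ⟨a, ha⟩ := hπsurj s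
    exact ⟨W.mkQ (0, a), ha⟩
  · -- range ι = ker π
    apply le_antisymm
    · rintro x ⟨u, rfl⟩
      rw [LinearMap.mem_ker]
      show π0 (0 : ↥(P.complex.X 0)) = 0
      exact map_zero π0
    · rintro x hx
      obtain ⟨⟨u, a⟩, rfl⟩ := W.mkQ_surjective x
      rw [LinearMap.mem_ker] at hx
      have hπa : π0 a = 0 := hx
      obtain ⟨p, hp⟩ := hexact0 a hπa
      refine ⟨u + f' p, ?_⟩
      show W.mkQ (u + f' p, 0) = W.mkQ (u, a)
      rw [Submodule.mkQ_apply, Submodule.mkQ_apply, Submodule.Quotient.eq]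
      exact ⟨p, by simp [Function.prod, Prod.ext_iff, hp, add_comm]⟩
  · -- non-split
    intro r hr
    let g : ↥(P.complex.X 0) →ₗ[R] ↥U :=
      r.comp (W.mkQ.comp (LinearMap.inr R ↥U ↥(P.complex.X 0)))
    refine hfnb (ModuleCat.ofHom g : P.complex.X 0 ⟶ U) ?_
    show P.complex.d 1 0 ≫ ModuleCat.ofHom g = f
    refine ModuleCat.hom_ext (LinearMap.ext fun p => ?_)
    show g (d10 p) = f' p
    have hgd : W.mkQ (0, d10 p) = W.mkQ (f' p, 0) := by
      rw [Submodule.mkQ_apply, Submodule.mkQ_apply, Submodule.Quotient.eq]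
      exact ⟨-p, by simp [Function.prod, Prod.ext_iff]⟩
    show r (W.mkQ (0, d10 p)) = f' p
    rw [hgd]
    have : r (ι (f' p)) = f' p := by
      rw [← LinearMap.comp_apply, hr, LinearMap.id_apply]
    exact this

end Stmt7Aux

theorem stmt7 (k R : Type) [Field k] [IsAlgClosed k] [Ring R] [Algebra k R]
    (S T U : ModuleCat.{0} R) [IsSimpleModule R S] [IsSimpleModule R T] [IsSimpleModule R U]
    (hST : IsEmpty (S ≃ₗ[R] T))
    (horthST : ∀ f : S ⟶ T, f = 0) (horthTS : ∀ f : T ⟶ S, f = 0)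
    (horthSU : ∀ f : S ⟶ U, f = 0) (horthUS : ∀ f : U ⟶ S, f = 0)
    (horthTU : ∀ f : T ⟶ U, f = 0) (horthUT : ∀ f : U ⟶ T, f = 0)
    (hS : EndIsScalar k S) (hT : EndIsScalar k T) (hU : EndIsScalar k U)
    (hSU : Nontrivial (ext1 k R S U)) (hTU : Nontrivial (ext1 k R T U)) :
    ∃ M : ModuleCat.{0} R, HasLength M 3 ∧ IsIndecomposable M ∧ ¬ IsUniserialModule M ∧
      ∃ N N' : Submodule R M, N ≠ N' ∧
        HasLength (ModuleCat.of R ↥N) 2 ∧ HasLength (ModuleCat.of R ↥N') 2 := by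
  classical
  obtain ⟨E, _, _, ι₁, π₁, hι₁, hπ₁, hEex, hEns⟩ := Stmt7Aux.exists_nonsplit S U hSU
  obtain ⟨F, _, _, ι₂, π₂, hι₂, hπ₂, hFex, hFns⟩ := Stmt7Aux.exists_nonsplit T U hTU
  haveI hSsimp : IsSimpleModule R ↥S := inferInstance
  haveI hTsimp : IsSimpleModule R ↥T := inferInstance
  haveI hUsimp : IsSimpleModule R ↥U := inferInstance
  have hπι₁ : ∀ u, π₁ (ι₁ u) = 0 := fun u =>
    LinearMap.mem_ker.mp (hEex ▸ LinearMap.mem_range_self ι₁ u)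
  have hπι₂ : ∀ u, π₂ (ι₂ u) = 0 := fun u =>
    LinearMap.mem_ker.mp (hFex ▸ LinearMap.mem_range_self ι₂ u)
  have hkerπ₁ : ∀ e, π₁ e = 0 → ∃ u, ι₁ u = e := fun e he =>
    LinearMap.mem_range.mp (hEex.symm ▸ LinearMap.mem_ker.mpr he)
  have hkerπ₂ : ∀ f, π₂ f = 0 → ∃ u, ι₂ u = f := fun f hf =>
    LinearMap.mem_range.mp (hFex.symm ▸ LinearMap.mem_ker.mpr hf)
  set W : Submodule R (E × F) := LinearMap.range (ι₁.prod (-ι₂)) with hW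
  let Mt := (E × F) ⧸ W
  let jE : E →ₗ[R] Mt := W.mkQ.comp (LinearMap.inl R E F)
  let jF : F →ₗ[R] Mt := W.mkQ.comp (LinearMap.inr R E F)
  have hWle : W ≤ LinearMap.ker
      ((π₁.comp (LinearMap.fst R E F)).prod (π₂.comp (LinearMap.snd R E F))) := by
    rintro ⟨e, f⟩ ⟨u, hu⟩
    simp only [LinearMap.prod_apply, Function.prod, LinearMap.neg_apply, Prod.mk.injEq] at hu
    rw [LinearMap.mem_ker]
    simp only [LinearMap.prod_apply, Function.prod, LinearMap.comp_apply, LinearMap.fst_apply,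
      LinearMap.snd_apply]
    rw [← hu.1, ← hu.2, map_neg, hπι₁, hπι₂, neg_zero]
    rfl
  let φ : Mt →ₗ[R] ↥S × ↥T :=
    W.liftQ ((π₁.comp (LinearMap.fst R E F)).prod (π₂.comp (LinearMap.snd R E F))) hWle
  have hφmk : ∀ (e : E) (f : F), φ (W.mkQ (e, f)) = (π₁ e, π₂ f) := fun e f => rfl
  have hφjE : ∀ e, φ (jE e) = (π₁ e, 0) := fun e => by
    show φ (W.mkQ (e, 0)) = _
    rw [hφmk, map_zero]
  have hφjF : ∀ f, φ (jF f) = (0, π₂ f) := fun f => by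
    show φ (W.mkQ (0, f)) = _
    rw [hφmk, map_zero]
  have hUMrange : ∀ u, jE (ι₁ u) = jF (ι₂ u) := fun u => by
    show W.mkQ (ι₁ u, 0) = W.mkQ (0, ι₂ u)
    rw [Submodule.mkQ_apply, Submodule.mkQ_apply, Submodule.Quotient.eq]
    exact ⟨u, by simp [Function.prod, Prod.ext_iff]⟩
  set UM : Submodule R Mt := LinearMap.range (jE.comp ι₁) with hUM
  have hUMF : UM = LinearMap.range (jF.comp ι₂) := by
    apply le_antisymm
    · rintro x ⟨u, rfl⟩
      exact ⟨u, ((hUMrange u).symm : jF (ι₂ u) = jE (ι₁ u))⟩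
    · rintro x ⟨u, rfl⟩
      exact ⟨u, (hUMrange u : jE (ι₁ u) = jF (ι₂ u))⟩
  have hjEinj : Function.Injective jE := by
    rw [← LinearMap.ker_eq_bot, LinearMap.ker_eq_bot']
    intro e he
    have : ((e, 0) : E × F) ∈ W := by
      rwa [← Submodule.Quotient.mk_eq_zero W]
    obtain ⟨u, hu⟩ := this
    simp only [LinearMap.prod_apply, Function.prod, LinearMap.neg_apply, Prod.mk.injEq] at hu
    have hu2 : ι₂ u = 0 := by rw [← neg_eq_zero]; exact hu.2
    have : u = 0 := hι₂ (by rw [hu2, map_zero])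
    rw [← hu.1, this, map_zero]
  have hjFinj : Function.Injective jF := by
    rw [← LinearMap.ker_eq_bot, LinearMap.ker_eq_bot']
    intro f hf
    have : ((0, f) : E × F) ∈ W := by
      rwa [← Submodule.Quotient.mk_eq_zero W]
    obtain ⟨u, hu⟩ := this
    simp only [LinearMap.prod_apply, Function.prod, LinearMap.neg_apply, Prod.mk.injEq] at hu
    have hu1 : u = 0 := hι₁ (by rw [hu.1, map_zero])
    rw [← hu.2, hu1, map_zero, neg_zero]
  have hkerφ : LinearMap.ker φ = UM := by
    apply le_antisymm
    · intro x hx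
      obtain ⟨⟨e, f⟩, rfl⟩ := W.mkQ_surjective x
      rw [LinearMap.mem_ker, hφmk, Prod.mk_eq_zero] at hx
      obtain ⟨u, hu⟩ := hkerπ₁ e hx.1
      obtain ⟨v, hv⟩ := hkerπ₂ f hx.2
      refine ⟨u + v, ?_⟩
      show W.mkQ (ι₁ (u + v), 0) = W.mkQ (e, f)
      rw [Submodule.mkQ_apply, Submodule.mkQ_apply, Submodule.Quotient.eq]
      refine ⟨v, ?_⟩
      simp [Function.prod, Prod.ext_iff, map_add, ← hu, ← hv]
    · rintro x ⟨u, rfl⟩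
      rw [LinearMap.mem_ker]
      show φ (jE (ι₁ u)) = 0
      rw [hφjE, hπι₁]
      rfl
  set N : Submodule R Mt := LinearMap.range jE with hN
  set N' : Submodule R Mt := LinearMap.range jF with hN'
  have hNker : N = LinearMap.ker ((LinearMap.snd R ↥S ↥T).comp φ) := by
    apply le_antisymm
    · rintro x ⟨e, rfl⟩
      rw [LinearMap.mem_ker, LinearMap.comp_apply, hφjE]
      rfl
    · intro x hx
      obtain ⟨⟨e, f⟩, rfl⟩ := W.mkQ_surjective x
      rw [LinearMap.mem_ker, LinearMap.comp_apply, hφmk] at hx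
      obtain ⟨v, hv⟩ := hkerπ₂ f hx
      refine ⟨e + ι₁ v, ?_⟩
      show W.mkQ (e + ι₁ v, 0) = W.mkQ (e, f)
      rw [Submodule.mkQ_apply, Submodule.mkQ_apply, Submodule.Quotient.eq]
      exact ⟨v, by simp [Function.prod, Prod.ext_iff, ← hv]⟩
  have hN'ker : N' = LinearMap.ker ((LinearMap.fst R ↥S ↥T).comp φ) := by
    apply le_antisymm
    · rintro x ⟨f, rfl⟩
      rw [LinearMap.mem_ker, LinearMap.comp_apply, hφjF]
      rfl
    · intro x hx
      obtain ⟨⟨e, f⟩, rfl⟩ := W.mkQ_surjective x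
      rw [LinearMap.mem_ker, LinearMap.comp_apply, hφmk] at hx
      obtain ⟨v, hv⟩ := hkerπ₁ e hx
      refine ⟨f + ι₂ v, ?_⟩
      show W.mkQ (0, f + ι₂ v) = W.mkQ (e, f)
      rw [Submodule.mkQ_apply, Submodule.mkQ_apply, Submodule.Quotient.eq]
      exact ⟨-v, by simp [Function.prod, Prod.ext_iff, ← hv]⟩
  have hφsurj : Function.Surjective φ := by
    rintro ⟨s, t⟩
    obtain ⟨e, he⟩ := hπ₁ s
    obtain ⟨f, hf⟩ := hπ₂ t
    exact ⟨W.mkQ (e, f), by rw [hφmk, he, hf]⟩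
  have hjEι₁inj : Function.Injective (jE.comp ι₁) := by
    rw [LinearMap.coe_comp]
    exact hjEinj.comp hι₁
  have hUMsimple : IsSimpleModule R ↥UM :=
    IsSimpleModule.congr (LinearEquiv.ofInjective (jE.comp ι₁) hjEι₁inj).symm
  have hUMatom : IsAtom UM := isSimpleModule_iff_isAtom.mp hUMsimple
  have hUMne : UM ≠ ⊥ := hUMatom.1
  -- key claim: every nonzero submodule of Mt contains UM
  have key : ∀ X : Submodule R Mt, X ⊓ UM = ⊥ → X = ⊥ := by
    intro X hXUM
    by_cases h0 : Submodule.map φ X = ⊥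
    · rw [eq_bot_iff]
      intro x hx
      have h1 : φ x ∈ Submodule.map φ X := ⟨x, hx, rfl⟩
      rw [h0, Submodule.mem_bot] at h1
      have hxUM : x ∈ UM := hkerφ ▸ LinearMap.mem_ker.mpr h1
      have h2 : x ∈ X ⊓ UM := ⟨hx, hxUM⟩
      rwa [hXUM] at h2
    · have hle : LinearMap.ker (LinearMap.snd R ↥S ↥T) ≤ Submodule.map φ X ∨
          LinearMap.ker (LinearMap.fst R ↥S ↥T) ≤ Submodule.map φ X := by
        rcases Stmt7Aux.submodule_prod_simples
            (fun g => by simpa using congrArg ModuleCat.Hom.hom (horthST (ModuleCat.ofHom g))) (Submodule.map φ X) with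
          h | h | h | h
        · exact absurd h h0
        · exact Or.inl h.ge
        · exact Or.inr h.ge
        · exact Or.inl (by rw [h]; exact le_top)
      exfalso
      rcases hle with hle | hle
      · -- splitting of E
        have hcover : ∀ e : E, ∃ e' u, jE e' ∈ X ∧ e = e' + ι₁ u := by
          intro e
          have h1 : ((π₁ e, 0) : ↥S × ↥T) ∈ Submodule.map φ X :=
            hle (LinearMap.mem_ker.mpr rfl)
          obtain ⟨x, hxX, hx⟩ := h1
          have hxN : x ∈ N := by
            rw [hNker, LinearMap.mem_ker, LinearMap.comp_apply, hx]
            rfl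
          obtain ⟨e', he'⟩ := hxN
          have h2 : jE (e - e') ∈ UM := by
            rw [← hkerφ, LinearMap.mem_ker, map_sub, he', map_sub, hφjE, hx, sub_self]
          obtain ⟨u, hu⟩ := h2
          have h3 : ι₁ u = e - e' := hjEinj hu
          refine ⟨e', u, he'.symm ▸ hxX, ?_⟩
          rw [h3]
          abel
        obtain ⟨r, hr⟩ := Stmt7Aux.retraction_of_compl ι₁ hι₁ jE hjEinj X
          (by rw [← hUM]; exact hXUM) hcover
        exact hEns r hr
      · -- splitting of F
        have hcover : ∀ f : F, ∃ f' u, jF f' ∈ X ∧ f = f' + ι₂ u := by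
          intro f
          have h1 : (((0 : ↥S), π₂ f) : ↥S × ↥T) ∈ Submodule.map φ X :=
            hle (LinearMap.mem_ker.mpr rfl)
          obtain ⟨x, hxX, hx⟩ := h1
          have hxN : x ∈ N' := by
            rw [hN'ker, LinearMap.mem_ker, LinearMap.comp_apply, hx]
            rfl
          obtain ⟨f', hf'⟩ := hxN
          have h2 : jF (f - f') ∈ UM := by
            rw [← hkerφ, LinearMap.mem_ker, map_sub, hf', map_sub, hφjF, hx, sub_self]
          rw [hUMF] at h2
          obtain ⟨u, hu⟩ := h2
          have h3 : ι₂ u = f - f' := hjFinj hu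
          refine ⟨f', u, hf'.symm ▸ hxX, ?_⟩
          rw [h3]
          abel
        obtain ⟨r, hr⟩ := Stmt7Aux.retraction_of_compl ι₂ hι₂ jF hjFinj X
          (by rw [← hUMF]; exact hXUM) hcover
        exact hFns r hr
  -- nonzero elements
  haveI hSnt : Nontrivial ↥S := IsSimpleModule.nontrivial R ↥S
  haveI hTnt : Nontrivial ↥T := IsSimpleModule.nontrivial R ↥T
  obtain ⟨s₀, hs₀⟩ := exists_ne (0 : ↥S)
  obtain ⟨t₀, ht₀⟩ := exists_ne (0 : ↥T)
  obtain ⟨e₀, he₀⟩ := hπ₁ s₀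
  obtain ⟨f₀, hf₀⟩ := hπ₂ t₀
  have hjEe₀N' : jE e₀ ∉ N' := by
    rintro ⟨f, hf⟩
    have h1 : W.mkQ (0, f) = W.mkQ (e₀, 0) := hf
    rw [Submodule.mkQ_apply, Submodule.mkQ_apply, Submodule.Quotient.eq] at h1
    obtain ⟨u, hu⟩ := h1
    have hu1 : ι₁ u = 0 - e₀ := congrArg Prod.fst hu
    rw [zero_sub] at hu1
    have : s₀ = 0 := by
      rw [← he₀, ← neg_neg e₀, ← hu1, map_neg, hπι₁, neg_zero]
    exact hs₀ this
  have hjFf₀N : jF f₀ ∉ N := by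
    rintro ⟨e, he⟩
    have h1 : W.mkQ (e, 0) = W.mkQ (0, f₀) := he
    rw [Submodule.mkQ_apply, Submodule.mkQ_apply, Submodule.Quotient.eq] at h1
    obtain ⟨u, hu⟩ := h1
    have hu2 : -ι₂ u = 0 - f₀ := congrArg Prod.snd hu
    rw [zero_sub] at hu2
    have h2 : ι₂ u = f₀ := neg_inj.mp hu2
    have : t₀ = 0 := by
      rw [← hf₀, ← h2, hπι₂]
    exact ht₀ this
  have hNneN' : N ≠ N' := fun h => hjEe₀N' (h ▸ ⟨e₀, rfl⟩)
  -- covering chain for length 3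
  have hbotUM : (⊥ : Submodule R Mt) ⋖ UM := bot_covBy_iff.mpr hUMatom
  have hUMleN : UM ≤ N := by
    rintro x ⟨u, rfl⟩
    exact ⟨ι₁ u, rfl⟩
  have hUMN : UM ⋖ N := by
    rw [covBy_iff_quot_is_simple hUMleN]
    let p : ↥N →ₗ[R] ↥S := ((LinearMap.fst R ↥S ↥T).comp φ).comp N.subtype
    have hpsurj : Function.Surjective p := by
      intro s
      obtain ⟨e, he⟩ := hπ₁ s
      refine ⟨⟨jE e, ⟨e, rfl⟩⟩, ?_⟩
      show (φ (jE e)).1 = s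
      rw [hφjE]
      exact he
    have hker : LinearMap.ker p = Submodule.comap N.subtype UM := by
      apply le_antisymm
      · intro x hx
        obtain ⟨e, he⟩ := x.2
        rw [LinearMap.mem_ker] at hx
        have h2 : (φ (x : Mt)).1 = 0 := hx
        show (x : Mt) ∈ UM
        rw [← hkerφ, LinearMap.mem_ker]
        have h1 : φ (x : Mt) = (π₁ e, 0) := by rw [← he, hφjE]
        rw [h1] at h2 ⊢
        exact Prod.ext h2 rfl
      · intro x hx
        have hx' : (x : Mt) ∈ UM := hx
        rw [LinearMap.mem_ker]
        show (φ (x : Mt)).1 = 0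
        obtain ⟨u, hu⟩ := hx'
        rw [← hu]
        show (φ (jE (ι₁ u))).1 = 0
        rw [hφjE]
        exact hπι₁ u
    rw [← hker]
    exact IsSimpleModule.congr (LinearMap.quotKerEquivOfSurjective p hpsurj)
  have hNtop : N ⋖ ⊤ := by
    have hcoatom : IsCoatom N := by
      rw [← isSimpleModule_iff_isCoatom, hNker]
      have hsurj2 : Function.Surjective ((LinearMap.snd R ↥S ↥T).comp φ) := by
        intro t
        obtain ⟨x, hx⟩ := hφsurj (0, t)
        exact ⟨x, by rw [LinearMap.comp_apply, hx, LinearMap.snd_apply]⟩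
      exact IsSimpleModule.congr (LinearMap.quotKerEquivOfSurjective _ hsurj2)
    exact covBy_top_iff.mpr hcoatom
  have hlenM : HasLength (ModuleCat.of R Mt) 3 :=
    Stmt7Aux.hasLength_three UM N hbotUM hUMN hNtop
  -- lengths of N and N'
  have hlenE : HasLength (ModuleCat.of R E) 2 := by
    apply Stmt7Aux.hasLength_two (LinearMap.range ι₁)
    · rw [bot_covBy_iff, ← isSimpleModule_iff_isAtom]
      exact IsSimpleModule.congr (LinearEquiv.ofInjective ι₁ hι₁).symm
    · rw [covBy_top_iff, ← isSimpleModule_iff_isCoatom, hEex]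
      exact IsSimpleModule.congr (LinearMap.quotKerEquivOfSurjective π₁ hπ₁)
  have hlenF : HasLength (ModuleCat.of R F) 2 := by
    apply Stmt7Aux.hasLength_two (LinearMap.range ι₂)
    · rw [bot_covBy_iff, ← isSimpleModule_iff_isAtom]
      exact IsSimpleModule.congr (LinearEquiv.ofInjective ι₂ hι₂).symm
    · rw [covBy_top_iff, ← isSimpleModule_iff_isCoatom, hFex]
      exact IsSimpleModule.congr (LinearMap.quotKerEquivOfSurjective π₂ hπ₂)
  have hlenN : HasLength (ModuleCat.of R ↥N) 2 :=
    Stmt7Aux.hasLength_congr (LinearEquiv.ofInjective jE hjEinj) hlenE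
  have hlenN' : HasLength (ModuleCat.of R ↥N') 2 :=
    Stmt7Aux.hasLength_congr (LinearEquiv.ofInjective jF hjFinj) hlenF
  refine ⟨ModuleCat.of R Mt, hlenM, ⟨?_, ?_⟩, ?_, N, N', hNneN', hlenN, hlenN'⟩
  · -- Nontrivial
    refine ⟨⟨jE e₀, 0, fun h => ?_⟩⟩
    have h1 : e₀ = 0 := hjEinj (by rw [h, map_zero])
    rw [h1, map_zero] at he₀
    exact hs₀ he₀.symm
  · -- indecomposable
    rintro ⟨N₁, N₂, hN₁, hN₂, hcompl⟩
    have h1 : UM ≤ N₁ := by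
      rcases hUMatom.le_iff.mp (inf_le_right : N₁ ⊓ UM ≤ UM) with h | h
      · exact absurd (key N₁ h) hN₁
      · exact h ▸ inf_le_left
    have h2 : UM ≤ N₂ := by
      rcases hUMatom.le_iff.mp (inf_le_right : N₂ ⊓ UM ≤ UM) with h | h
      · exact absurd (key N₂ h) hN₂
      · exact h ▸ inf_le_left
    have h3 : UM ≤ N₁ ⊓ N₂ := le_inf h1 h2
    rw [hcompl.disjoint.eq_bot] at h3
    exact hUMne (le_bot_iff.mp h3)
  · -- not uniserial
    intro huni
    rcases huni N N' with h | h
    · exact hjEe₀N' (h ⟨e₀, rfl⟩)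
    · exact hjFf₀N (h ⟨f₀, rfl⟩)
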